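/- (Quadratic reciprocity in ℤ[√2].) Let π₂, ρ₂ ∈ ℤ[√2] be totally positive elements with π₂ ≡ ρ₂ ≡ 1 (mod 2ℤ[√2]) whose norms p = N(π₂) and q = N(ρ₂) are distinct odd primes. Then π₂ is a square modulo the ideal ρ₂ℤ[√2] if and only if ρ₂ is a square modulo the ideal π₂ℤ[√2]. -/

import Mathlib

open NumberField

/-- An element of `ℤ√2` is totally positive if it is positive under both real embeddings
`a + b√2 ↦ a ± b√2`. -/
def Zsqrtd.IsTotallyPositive (x : ℤ√2) : Prop :=
  0 < (x.re : ℝ) + (x.im : ℝ) * Real.sqrt 2 ∧ 0 < (x.re : ℝ) - (x.im : ℝ) * Real.sqrt 2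

-- divisibility characterization
lemma zsq_dvd_iff {q : ℕ} (hq : q.Prime) (ρ : ℤ√2)
    (hnorm : ρ.re * ρ.re - 2 * (ρ.im * ρ.im) = (q : ℤ))
    (hc : ¬ ((q : ℤ) ∣ ρ.re)) (z : ℤ√2) :
    ρ ∣ z ↔ (q : ℤ) ∣ ρ.re * z.im - ρ.im * z.re := by
  have hq' : Prime (q : ℤ) := Nat.prime_iff_prime_int.mp hq
  have hq0 : (q : ℤ) ≠ 0 := by exact_mod_cast hq.ne_zero
  constructor
  · rintro ⟨w, rfl⟩
    exact ⟨w.im, by simp only [Zsqrtd.re_mul, Zsqrtd.im_mul]; linear_combination w.im * hnorm⟩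
  · rintro ⟨k, hk⟩
    have h2 : (q : ℤ) ∣ ρ.re * z.re - 2 * (ρ.im * z.im) := by
      have hdvd : (q : ℤ) ∣ ρ.re * (ρ.re * z.re - 2 * (ρ.im * z.im)) :=
        ⟨z.re - 2 * ρ.im * k, by linear_combination z.re * hnorm - 2 * ρ.im * hk⟩
      exact (hq'.dvd_mul.mp hdvd).resolve_left hc
    obtain ⟨j, hj⟩ := h2
    refine ⟨⟨j, k⟩, ?_⟩
    have : (q : ℤ√2) * z = (q : ℤ√2) * (ρ * ⟨j, k⟩) := by
      ext <;> simp only [Zsqrtd.re_mul, Zsqrtd.im_mul, Zsqrtd.re_natCast, Zsqrtd.im_natCast]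
      · linear_combination ρ.re * hj + 2 * ρ.im * hk - z.re * hnorm
      · linear_combination ρ.im * hj + ρ.re * hk - z.im * hnorm
    exact Zsqrtd.eq_of_smul_eq_smul_left hq0 this


lemma zsq_square_iff {q : ℕ} (hq : q.Prime) (ρ : ℤ√2)
    (hnorm : ρ.re * ρ.re - 2 * (ρ.im * ρ.im) = (q : ℤ))
    (hc : ¬ ((q : ℤ) ∣ ρ.re)) (hd : ¬ ((q : ℤ) ∣ ρ.im)) (w : ℤ√2) :
    (∃ ξ : ℤ√2, ρ ∣ w - ξ ^ 2) ↔
      IsSquare (((w.re * ρ.im - w.im * ρ.re) * ρ.im : ℤ) : ZMod q) := by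
  haveI := Fact.mk hq
  have hdq : ((ρ.im : ℤ) : ZMod q) ≠ 0 := fun h => hd ((ZMod.intCast_zmod_eq_zero_iff_dvd _ _).mp h)
  have hsq : ((ρ.re : ℤ) : ZMod q) ^ 2 = 2 * ((ρ.im : ℤ) : ZMod q) ^ 2 := by
    have h := congrArg (fun x : ℤ => (x : ZMod q)) hnorm
    push_cast at h
    rw [ZMod.natCast_self] at h
    linear_combination h
  constructor
  · rintro ⟨ξ, hdvd⟩
    rw [zsq_dvd_iff hq ρ hnorm hc] at hdvd
    have h0 : ((ρ.re * (w - ξ ^ 2).im - ρ.im * (w - ξ ^ 2).re : ℤ) : ZMod q) = 0 :=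
      (ZMod.intCast_zmod_eq_zero_iff_dvd _ _).mpr hdvd
    simp only [pow_two, Zsqrtd.im_sub, Zsqrtd.re_sub, Zsqrtd.re_mul, Zsqrtd.im_mul] at h0
    push_cast at h0
    refine ⟨(ρ.im : ZMod q) * (ξ.re : ℤ) - (ρ.re : ZMod q) * (ξ.im : ℤ), ?_⟩
    push_cast
    linear_combination (-( (ρ.im : ℤ) : ZMod q)) * h0 - ((ξ.im : ℤ) : ZMod q) ^ 2 * hsq
  · rintro ⟨u, hu⟩
    set e₀ : ZMod q := u * (((ρ.im : ℤ) : ZMod q))⁻¹ with he₀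
    refine ⟨((e₀.val : ℤ) : ℤ√2), ?_⟩
    rw [zsq_dvd_iff hq ρ hnorm hc, ← ZMod.intCast_zmod_eq_zero_iff_dvd]
    have hev : ((e₀.val : ℕ) : ZMod q) = e₀ := by
      rw [ZMod.natCast_val, ZMod.cast_id]
    simp only [pow_two, Zsqrtd.im_sub, Zsqrtd.re_sub, Zsqrtd.re_mul, Zsqrtd.im_mul,
      Zsqrtd.re_intCast, Zsqrtd.im_intCast]
    push_cast
    rw [hev]
    push_cast at hu
    have h2 : ((ρ.im : ℤ) : ZMod q) * e₀ = u := by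
      rw [he₀, mul_comm u, ← mul_assoc, mul_inv_cancel₀ hdq, one_mul]
    have h3 : ((ρ.im : ℤ) : ZMod q) * (e₀ * e₀)
        = ((w.re : ℤ) : ZMod q) * ((ρ.im : ℤ) : ZMod q)
          - ((w.im : ℤ) : ZMod q) * ((ρ.re : ℤ) : ZMod q) := by
      apply mul_left_cancel₀ hdq
      linear_combination (((ρ.im : ℤ) : ZMod q) * e₀ + u) * h2 - hu
    linear_combination h3


-- odd squares are 1 mod 8
private lemma odd_sq_mod8 {x : ℤ} (hx : Odd x) : (8 : ℤ) ∣ x * x - 1 := by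
  obtain ⟨k, rfl⟩ := hx
  rcases Int.even_or_odd k with ⟨j, rfl⟩ | ⟨j, rfl⟩
  · exact ⟨2 * j * j + j, by ring⟩
  · exact ⟨2 * j * j + 3 * j + 1, by ring⟩

-- norms are 1 mod 8
private lemma norm_mod8 {x y : ℤ} {P : ℕ} (hx : Odd x) (hy : Even y)
    (h : x * x - 2 * (y * y) = (P : ℤ)) (hP : 2 ≤ P) : P % 8 = 1 := by
  obtain ⟨l, hl⟩ := hy
  obtain ⟨t, ht⟩ := odd_sq_mod8 hx
  have hu : 2 * (y * y) = 8 * (l * l) := by rw [hl]; ring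
  have h8 : (P : ℤ) % 8 = 1 := by omega
  omega

private lemma not_dvd_pair {P : ℕ} (hP : P.Prime) (hP2 : P ≠ 2) {x y : ℤ}
    (h : x * x - 2 * (y * y) = (P : ℤ)) : ¬((P : ℤ) ∣ x) ∧ ¬((P : ℤ) ∣ y) := by
  have hP' : Prime (P : ℤ) := Nat.prime_iff_prime_int.mp hP
  have hboth : ¬(((P : ℤ) ∣ x) ∧ ((P : ℤ) ∣ y)) := by
    rintro ⟨⟨x1, rfl⟩, ⟨y1, rfl⟩⟩
    have hdvd : ((P * P : ℕ) : ℤ) ∣ (P : ℤ) :=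
      ⟨x1 * x1 - 2 * (y1 * y1), by push_cast; linear_combination -h⟩
    have hdvd' : P * P ∣ P := by exact_mod_cast hdvd
    have := Nat.le_of_dvd hP.pos hdvd'
    nlinarith [hP.two_le]
  have h2 : ¬ ((P : ℤ) ∣ 2) := by
    intro h2
    have : P ∣ 2 := by exact_mod_cast h2
    exact hP2 ((Nat.prime_dvd_prime_iff_eq hP Nat.prime_two).mp this)
  constructor
  · intro hx
    have hyy : (P : ℤ) ∣ 2 * (y * y) := by
      have e : 2 * (y * y) = x * x - (P : ℤ) := by linarith
      rw [e]
      exact dvd_sub (hx.mul_left x) dvd_rfl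
    have : (P : ℤ) ∣ y := by
      rcases hP'.dvd_mul.mp hyy with h' | h'
      · exact absurd h' h2
      · exact (hP'.dvd_mul.mp h').elim id id
    exact hboth ⟨hx, this⟩
  · intro hy
    have hxx : (P : ℤ) ∣ x * x := by
      have e : x * x = (P : ℤ) + 2 * (y * y) := by linarith
      rw [e]
      exact dvd_add dvd_rfl ((hy.mul_left y).mul_left 2)
    have : (P : ℤ) ∣ x := (hP'.dvd_mul.mp hxx).elim id id
    exact hboth ⟨this, hy⟩

private lemma not_dvd_ms {p q : ℕ} (hp : p.Prime) (hq : q.Prime) (hq2 : q ≠ 2)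
    (hpq : p ≠ q) {s m : ℤ} (h : s * s - 2 * (m * m) = ((p * q : ℕ) : ℤ)) :
    ¬((q : ℤ) ∣ m) ∧ ¬((q : ℤ) ∣ s) := by
  have hq' : Prime (q : ℤ) := Nat.prime_iff_prime_int.mp hq
  have hqpq : (q : ℤ) ∣ ((p * q : ℕ) : ℤ) := by
    push_cast; exact dvd_mul_left _ _
  have h2 : ¬ ((q : ℤ) ∣ 2) := by
    intro h2
    have : q ∣ 2 := by exact_mod_cast h2
    exact hq2 ((Nat.prime_dvd_prime_iff_eq hq Nat.prime_two).mp this)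
  have hm : ¬((q : ℤ) ∣ m) := by
    intro hm
    have hss : (q : ℤ) ∣ s * s := by
      have e : s * s = ((p * q : ℕ) : ℤ) + 2 * (m * m) := by linarith
      rw [e]
      exact dvd_add hqpq ((hm.mul_left m).mul_left 2)
    have hsd : (q : ℤ) ∣ s := (hq'.dvd_mul.mp hss).elim id id
    obtain ⟨s1, rfl⟩ := hsd
    obtain ⟨m1, rfl⟩ := hm
    have hdvd : ((q * q : ℕ) : ℤ) ∣ ((p * q : ℕ) : ℤ) :=
      ⟨s1 * s1 - 2 * (m1 * m1), by push_cast at h ⊢; linear_combination -h⟩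
    have hdvd' : q * q ∣ q * p := by
      rw [mul_comm q p]; exact_mod_cast hdvd
    have hqp : q ∣ p := (mul_dvd_mul_iff_left (Nat.pos_of_ne_zero hq.ne_zero).ne').mp hdvd'
    exact hpq ((Nat.prime_dvd_prime_iff_eq hq hp).mp hqp).symm
  refine ⟨hm, fun hsd => ?_⟩
  have hmm : (q : ℤ) ∣ 2 * (m * m) := by
    have e : 2 * (m * m) = s * s - ((p * q : ℕ) : ℤ) := by linarith
    rw [e]
    exact dvd_sub (hsd.mul_left s) hqpq
  rcases hq'.dvd_mul.mp hmm with h' | h'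
  · exact h2 h'
  · exact hm ((hq'.dvd_mul.mp h').elim id id)

private lemma gcd_one_of_norm {P : ℕ} (hP : P.Prime) {x y : ℤ}
    (h : x * x - 2 * (y * y) = (P : ℤ)) : Int.gcd x y = 1 := by
  obtain ⟨x1, hx1⟩ := Int.gcd_dvd_left (a := x) (b := y)
  obtain ⟨y1, hy1⟩ := Int.gcd_dvd_right (a := x) (b := y)
  have key : (P : ℤ) = (↑(x.gcd y) * x1) * (↑(x.gcd y) * x1)
      - 2 * ((↑(x.gcd y) * y1) * (↑(x.gcd y) * y1)) := by
    rw [← hx1, ← hy1]; exact h.symm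
  have hdvd : ((x.gcd y * x.gcd y : ℕ) : ℤ) ∣ (P : ℤ) :=
    ⟨x1 * x1 - 2 * (y1 * y1), by push_cast; linear_combination key⟩
  have hdvd' : x.gcd y * x.gcd y ∣ P := by exact_mod_cast hdvd
  exact Nat.isUnit_iff.mp (hP.squarefree _ hdvd')

open NumberTheorySymbols in
private lemma symbol_eq {a b c d : ℤ} {p q : ℕ} [Fact p.Prime] [Fact q.Prime] (hp : p.Prime) (hq : q.Prime)
    (hp2 : p ≠ 2) (hq2 : q ≠ 2) (hpq : p ≠ q)
    (hpa : a * a - 2 * (b * b) = (p : ℤ)) (hqc : c * c - 2 * (d * d) = (q : ℤ))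
    (haodd : Odd a) (hbeven : Even b) (hcodd : Odd c) (hdeven : Even d)
    (ha : 0 < a) (hc : 0 < c) (hs : 0 < a * c - 2 * (b * d)) :
    legendreSym q ((a * d - b * c) * d) = legendreSym p ((c * b - d * a) * b) := by
  haveI : NeZero p := ⟨hp.pos.ne'⟩
  haveI : NeZero q := ⟨hq.pos.ne'⟩
  have hp' : Prime (p : ℤ) := Nat.prime_iff_prime_int.mp hp
  have hq' : Prime (q : ℤ) := Nat.prime_iff_prime_int.mp hq
  set m := a * d - b * c with hm
  set s := a * c - 2 * (b * d) with hsdef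
  -- key norm identity
  have hs2 : s * s - 2 * (m * m) = ((p * q : ℕ) : ℤ) := by
    push_cast
    linear_combination (c * c - 2 * (d * d)) * hpa + (p : ℤ) * hqc
  -- non-divisibility facts
  obtain ⟨hqm, hqs⟩ := not_dvd_ms hp hq hq2 hpq hs2
  obtain ⟨hpm, hps⟩ := not_dvd_ms hq hp hp2 hpq.symm (by rwa [Nat.mul_comm p q] at hs2)
  obtain ⟨hqcd, hqdd⟩ := not_dvd_pair hq hq2 hqc
  obtain ⟨hpad, hpbd⟩ := not_dvd_pair hp hp2 hpa
  -- mod 8 facts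
  have hp8 : p % 8 = 1 := norm_mod8 haodd hbeven hpa hp.two_le
  have hq8 : q % 8 = 1 := norm_mod8 hcodd hdeven hqc hq.two_le
  have hp4 : p % 4 = 1 := by omega
  have hq4 : q % 4 = 1 := by omega
  have hpq4 : (p * q) % 4 = 1 := by
    have := Nat.mul_mod p q 4
    rw [hp4, hq4] at this
    simpa using this
  -- nat abs
  set A := a.natAbs with hAdef
  set C := c.natAbs with hCdef
  set S := s.natAbs with hSdef2
  have hA : (A : ℤ) = a := Int.natAbs_of_nonneg ha.le
  have hC : (C : ℤ) = c := Int.natAbs_of_nonneg hc.le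
  have hS : (S : ℤ) = s := Int.natAbs_of_nonneg hs.le
  have hAodd : Odd A := Int.natAbs_odd.mpr haodd
  have hCodd : Odd C := Int.natAbs_odd.mpr hcodd
  have hsodd : Odd s := (haodd.mul hcodd).sub_even ⟨b * d, by ring⟩
  have hSodd : Odd S := Int.natAbs_odd.mpr hsodd
  -- nonzero casts mod q
  have hmq0 : ((m : ℤ) : ZMod q) ≠ 0 :=
    fun h => hqm ((ZMod.intCast_zmod_eq_zero_iff_dvd _ _).mp h)
  have hsq0 : ((s : ℤ) : ZMod q) ≠ 0 :=
    fun h => hqs ((ZMod.intCast_zmod_eq_zero_iff_dvd _ _).mp h)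
  have hmd0 : (((m * d) : ℤ) : ZMod q) ≠ 0 := by
    intro h
    rcases hq'.dvd_mul.mp ((ZMod.intCast_zmod_eq_zero_iff_dvd _ _).mp h) with h' | h'
    · exact hqm h'
    · exact hqdd h'
  have hmp0 : ((m : ℤ) : ZMod p) ≠ 0 :=
    fun h => hpm ((ZMod.intCast_zmod_eq_zero_iff_dvd _ _).mp h)
  have hsp0 : ((s : ℤ) : ZMod p) ≠ 0 :=
    fun h => hps ((ZMod.intCast_zmod_eq_zero_iff_dvd _ _).mp h)
  have hcbda : c * b - d * a = -m := by rw [hm]; ring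
  have hmb0 : ((((c * b - d * a) * b : ℤ)) : ZMod p) ≠ 0 := by
    intro h
    rcases hp'.dvd_mul.mp ((ZMod.intCast_zmod_eq_zero_iff_dvd _ _).mp h) with h' | h'
    · rw [hcbda, dvd_neg] at h'
      exact hpm h'
    · exact hpbd h'
  -- gcd facts
  have hab : Int.gcd a b = 1 := gcd_one_of_norm hp hpa
  have hcd : Int.gcd c d = 1 := gcd_one_of_norm hq hqc
  have hgcdbA : Int.gcd b ((A : ℕ) : ℤ) = 1 := by
    rw [Int.gcd_def, Int.natAbs_natCast, Nat.gcd_comm]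
    exact hab
  have hgcddC : Int.gcd d ((C : ℕ) : ℤ) = 1 := by
    rw [Int.gcd_def, Int.natAbs_natCast, Nat.gcd_comm]
    exact hcd
  have hms : Int.gcd m s = 1 := by
    by_contra hne
    have hrp : (Int.gcd m s).minFac.Prime := Nat.minFac_prime hne
    have hrm : ((Int.gcd m s).minFac : ℤ) ∣ m :=
      dvd_trans (Int.natCast_dvd_natCast.mpr (Nat.minFac_dvd _)) (Int.gcd_dvd_left _ _)
    have hrs : ((Int.gcd m s).minFac : ℤ) ∣ s :=
      dvd_trans (Int.natCast_dvd_natCast.mpr (Nat.minFac_dvd _)) (Int.gcd_dvd_right _ _)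
    have hrpq : ((Int.gcd m s).minFac : ℤ) ∣ ((p * q : ℕ) : ℤ) := by
      rw [← hs2]
      exact dvd_sub (hrs.mul_left s) ((hrm.mul_left m).mul_left 2)
    have hrpq' : (Int.gcd m s).minFac ∣ p * q := by exact_mod_cast hrpq
    rcases (Nat.Prime.dvd_mul hrp).mp hrpq' with h' | h'
    · exact hpm (((Nat.prime_dvd_prime_iff_eq hrp hp).mp h') ▸ hrm)
    · exact hqm (((Nat.prime_dvd_prime_iff_eq hrp hq).mp h') ▸ hrm)
  have hgcdmS : Int.gcd m ((S : ℕ) : ℤ) = 1 := by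
    rw [Int.gcd_def, Int.natAbs_natCast]
    exact hms
  -- E1 : leg q (m*d) * leg q s = leg q c
  have E1 : legendreSym q (m * d) * legendreSym q s = legendreSym q c := by
    have id1 : m * d * s = c * (m * m) + m * b * (q : ℤ) := by
      linear_combination (m * b) * hqc
    rw [← legendreSym.mul, id1, legendreSym.mod q (c * (m * m) + m * b * (q : ℤ)),
      Int.add_mul_emod_self_right, ← legendreSym.mod, legendreSym.mul,
      show m * m = m ^ 2 from (sq m).symm, legendreSym.sq_one' (p := q) hmq0, mul_one]
  -- E2 : leg p ((c*b-d*a)*b) * leg p s = leg p a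
  have E2 : legendreSym p ((c * b - d * a) * b) * legendreSym p s = legendreSym p a := by
    have id2 : (c * b - d * a) * b * s = a * (m * m) + -(m * d) * (p : ℤ) := by
      linear_combination (-(m * d)) * hpa
    rw [← legendreSym.mul, id2, legendreSym.mod p (a * (m * m) + -(m * d) * (p : ℤ)),
      Int.add_mul_emod_self_right, ← legendreSym.mod, legendreSym.mul,
      show m * m = m ^ 2 from (sq m).symm, legendreSym.sq_one' (p := p) hmp0, mul_one]
  -- E3 : leg p s * leg q s = χ₈' S
  have E3 : legendreSym p s * legendreSym q s = ZMod.χ₈' (S : ZMod 8) := by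
    have hdl : ((S : ℕ) : ℤ) ∣ (-2 * (m * m)) - ((p * q : ℕ) : ℤ) := by
      refine ⟨-s, ?_⟩
      rw [hS]
      linear_combination hs2
    have hmodS : (((p * q : ℕ) : ℤ)) % ((S : ℕ) : ℤ) = (-2 * (m * m)) % ((S : ℕ) : ℤ) :=
      Int.modEq_iff_dvd.mpr hdl
    calc legendreSym p s * legendreSym q s
        = J(s | p) * J(s | q) := by rw [jacobiSym.legendreSym.to_jacobiSym, jacobiSym.legendreSym.to_jacobiSym]
      _ = J(s | p * q) := (jacobiSym.mul_right s p q).symm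
      _ = J(((S : ℕ) : ℤ) | p * q) := by rw [hS]
      _ = J(((p * q : ℕ) : ℤ) | S) :=
          (jacobiSym.quadratic_reciprocity_one_mod_four hpq4 hSodd).symm
      _ = J(-2 * (m * m) | S) := jacobiSym.mod_left' hmodS
      _ = ZMod.χ₈' (S : ZMod 8) := by
          rw [jacobiSym.mul_left, jacobiSym.at_neg_two hSodd,
            show m * m = m ^ 2 from (sq m).symm, jacobiSym.sq_one' hgcdmS, mul_one]
  -- EA : leg p a = χ₈' A
  have EA : legendreSym p a = ZMod.χ₈' (A : ZMod 8) := by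
    have hdl : ((A : ℕ) : ℤ) ∣ (-2 * (b * b)) - ((p : ℕ) : ℤ) := by
      refine ⟨-a, ?_⟩
      rw [hA]
      linear_combination hpa
    have hmodA : (((p : ℕ) : ℤ)) % ((A : ℕ) : ℤ) = (-2 * (b * b)) % ((A : ℕ) : ℤ) :=
      Int.modEq_iff_dvd.mpr hdl
    calc legendreSym p a = J(a | p) := jacobiSym.legendreSym.to_jacobiSym p a
      _ = J(((A : ℕ) : ℤ) | p) := by rw [hA]
      _ = J(((p : ℕ) : ℤ) | A) :=
          (jacobiSym.quadratic_reciprocity_one_mod_four hp4 hAodd).symm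
      _ = J(-2 * (b * b) | A) := jacobiSym.mod_left' hmodA
      _ = ZMod.χ₈' (A : ZMod 8) := by
          rw [jacobiSym.mul_left, jacobiSym.at_neg_two hAodd,
            show b * b = b ^ 2 from (sq b).symm, jacobiSym.sq_one' hgcdbA, mul_one]
  -- EC : leg q c = χ₈' C
  have EC : legendreSym q c = ZMod.χ₈' (C : ZMod 8) := by
    have hdl : ((C : ℕ) : ℤ) ∣ (-2 * (d * d)) - ((q : ℕ) : ℤ) := by
      refine ⟨-c, ?_⟩
      rw [hC]
      linear_combination hqc
    have hmodC : (((q : ℕ) : ℤ)) % ((C : ℕ) : ℤ) = (-2 * (d * d)) % ((C : ℕ) : ℤ) :=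
      Int.modEq_iff_dvd.mpr hdl
    calc legendreSym q c = J(c | q) := jacobiSym.legendreSym.to_jacobiSym q c
      _ = J(((C : ℕ) : ℤ) | q) := by rw [hC]
      _ = J(((q : ℕ) : ℤ) | C) :=
          (jacobiSym.quadratic_reciprocity_one_mod_four hq4 hCodd).symm
      _ = J(-2 * (d * d) | C) := jacobiSym.mod_left' hmodC
      _ = ZMod.χ₈' (C : ZMod 8) := by
          rw [jacobiSym.mul_left, jacobiSym.at_neg_two hCodd,
            show d * d = d ^ 2 from (sq d).symm, jacobiSym.sq_one' hgcddC, mul_one]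
  -- E4 : χ₈' A * χ₈' C * χ₈' S = 1
  have E4 : ZMod.χ₈' (A : ZMod 8) * ZMod.χ₈' (C : ZMod 8) * ZMod.χ₈' (S : ZMod 8) = 1 := by
    have h8 : (8 : ℤ) ∣ a * c * s - 1 := by
      obtain ⟨b1, hb1⟩ := hbeven
      obtain ⟨d1, hd1⟩ := hdeven
      obtain ⟨t, ht⟩ := odd_sq_mod8 (haodd.mul hcodd)
      refine ⟨t - a * c * (b1 * d1), ?_⟩
      rw [hsdef, hb1, hd1]
      linear_combination ht
    have h0 : ((a * c * s - 1 : ℤ) : ZMod 8) = 0 :=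
      (ZMod.intCast_zmod_eq_zero_iff_dvd _ 8).mpr h8
    push_cast at h0
    have hacs : (((A * C * S : ℕ) : ℕ) : ZMod 8) = 1 := by
      have : (((A * C * S : ℕ) : ℤ) : ZMod 8) = 1 := by
        push_cast [hA, hC, hS]
        linear_combination h0
      rwa [Int.cast_natCast] at this
    have := congrArg ZMod.χ₈' hacs
    rw [map_one] at this
    rw [← this]
    push_cast
    rw [map_mul, map_mul]
  -- assemble
  have hu2 : legendreSym q s * legendreSym q s = 1 := by
    have := legendreSym.sq_one (p := q) hsq0
    rwa [pow_two] at this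
  have hv2 : legendreSym p s * legendreSym p s = 1 := by
    have := legendreSym.sq_one (p := p) hsp0
    rwa [pow_two] at this
  have hxy : legendreSym q (m * d) * legendreSym p ((c * b - d * a) * b) = 1 := by
    have key : legendreSym q (m * d) * legendreSym p ((c * b - d * a) * b)
        = (legendreSym q (m * d) * legendreSym q s)
          * (legendreSym p ((c * b - d * a) * b) * legendreSym p s)
          * (legendreSym p s * legendreSym q s) := by
      rw [show (legendreSym q (m * d) * legendreSym q s)
          * (legendreSym p ((c * b - d * a) * b) * legendreSym p s)
          * (legendreSym p s * legendreSym q s)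
        = (legendreSym q (m * d) * legendreSym p ((c * b - d * a) * b))
          * ((legendreSym q s * legendreSym q s) * (legendreSym p s * legendreSym p s))
        from by ring, hu2, hv2, mul_one, mul_one]
    rw [key, E1, E2, E3, EA, EC]
    linear_combination E4
  have hx1 := legendreSym.eq_one_or_neg_one (p := q) hmd0
  have hy1 := legendreSym.eq_one_or_neg_one (p := p) hmb0
  rcases hx1 with h | h <;> rcases hy1 with h' | h' <;>
    simp only [h, h'] at hxy ⊢ <;> norm_num at hxy



/-- **Quadratic reciprocity in `ℤ[√2]`.**  If `π₂, ρ₂ ∈ ℤ[√2]` are totally positive,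
`≡ 1 (mod 2)`, and their norms are distinct odd primes, then `π₂` is a square modulo
`ρ₂ ℤ[√2]` iff `ρ₂` is a square modulo `π₂ ℤ[√2]`. -/
theorem quadratic_reciprocity_zsqrtd_two
    (π₂ ρ₂ : ℤ√2)
    (hπpos : π₂.IsTotallyPositive) (hρpos : ρ₂.IsTotallyPositive)
    (hπ1 : (2 : ℤ√2) ∣ π₂ - 1) (hρ1 : (2 : ℤ√2) ∣ ρ₂ - 1)
    (p q : ℕ) (hp : p.Prime) (hq : q.Prime) (hpodd : Odd p) (hqodd : Odd q) (hpq : p ≠ q)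
    (hπN : π₂.norm = (p : ℤ)) (hρN : ρ₂.norm = (q : ℤ)) :
    (∃ ξ : ℤ√2, ρ₂ ∣ π₂ - ξ ^ 2) ↔ (∃ ξ : ℤ√2, π₂ ∣ ρ₂ - ξ ^ 2) := by
  haveI := Fact.mk hp
  haveI := Fact.mk hq
  have hp' : Prime (p : ℤ) := Nat.prime_iff_prime_int.mp hp
  have hq' : Prime (q : ℤ) := Nat.prime_iff_prime_int.mp hq
  have hp2 : p ≠ 2 := by rintro rfl; exact (by decide : ¬ Odd 2) hpodd
  have hq2 : q ≠ 2 := by rintro rfl; exact (by decide : ¬ Odd 2) hqodd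
  have hπnorm : π₂.re * π₂.re - 2 * (π₂.im * π₂.im) = (p : ℤ) := by
    rw [← hπN, Zsqrtd.norm_def]; ring
  have hρnorm : ρ₂.re * ρ₂.re - 2 * (ρ₂.im * ρ₂.im) = (q : ℤ) := by
    rw [← hρN, Zsqrtd.norm_def]; ring
  -- parity of components
  have hcast2 : ((2 : ℤ) : ℤ√2) = (2 : ℤ√2) := by norm_cast
  have hπpar : (2 : ℤ) ∣ (π₂ - 1).re ∧ (2 : ℤ) ∣ (π₂ - 1).im := by
    rw [← Zsqrtd.intCast_dvd, hcast2]; exact hπ1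
  have hρpar : (2 : ℤ) ∣ (ρ₂ - 1).re ∧ (2 : ℤ) ∣ (ρ₂ - 1).im := by
    rw [← Zsqrtd.intCast_dvd, hcast2]; exact hρ1
  have haodd : Odd π₂.re := by
    obtain ⟨k, hk⟩ := hπpar.1
    simp only [Zsqrtd.re_sub, Zsqrtd.re_one] at hk
    exact ⟨k, by omega⟩
  have hbeven : Even π₂.im := by
    obtain ⟨l, hl⟩ := hπpar.2
    simp only [Zsqrtd.im_sub, Zsqrtd.im_one] at hl
    exact ⟨l, by omega⟩
  have hcodd : Odd ρ₂.re := by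
    obtain ⟨k, hk⟩ := hρpar.1
    simp only [Zsqrtd.re_sub, Zsqrtd.re_one] at hk
    exact ⟨k, by omega⟩
  have hdeven : Even ρ₂.im := by
    obtain ⟨l, hl⟩ := hρpar.2
    simp only [Zsqrtd.im_sub, Zsqrtd.im_one] at hl
    exact ⟨l, by omega⟩
  -- positivity of components
  obtain ⟨hπ1', hπ2'⟩ := hπpos
  obtain ⟨hρ1', hρ2'⟩ := hρpos
  have hsqrt2 : Real.sqrt 2 ^ 2 = 2 := Real.sq_sqrt (by norm_num)
  have hapos : 0 < π₂.re := by
    have : (0 : ℝ) < (π₂.re : ℝ) := by linarith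
    exact_mod_cast this
  have hcpos : 0 < ρ₂.re := by
    have : (0 : ℝ) < (ρ₂.re : ℝ) := by linarith
    exact_mod_cast this
  have hspos : 0 < π₂.re * ρ₂.re - 2 * (π₂.im * ρ₂.im) := by
    have h1 := mul_pos hπ1' hρ2'
    have h2 := mul_pos hπ2' hρ1'
    have hkey : ((π₂.re : ℝ) + (π₂.im : ℝ) * Real.sqrt 2)
          * ((ρ₂.re : ℝ) - (ρ₂.im : ℝ) * Real.sqrt 2)
        + ((π₂.re : ℝ) - (π₂.im : ℝ) * Real.sqrt 2)
          * ((ρ₂.re : ℝ) + (ρ₂.im : ℝ) * Real.sqrt 2)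
        = 2 * ((π₂.re : ℝ) * (ρ₂.re : ℝ) - 2 * ((π₂.im : ℝ) * (ρ₂.im : ℝ))) := by
      linear_combination (-2 * (π₂.im : ℝ) * (ρ₂.im : ℝ)) * hsqrt2
    have : (0 : ℝ) < (π₂.re : ℝ) * (ρ₂.re : ℝ) - 2 * ((π₂.im : ℝ) * (ρ₂.im : ℝ)) := by
      linarith
    exact_mod_cast this
  -- non-divisibility
  obtain ⟨hqcd, hqdd⟩ := not_dvd_pair hq hq2 hρnorm
  obtain ⟨hpad, hpbd⟩ := not_dvd_pair hp hp2 hπnorm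
  have hs2 : (π₂.re * ρ₂.re - 2 * (π₂.im * ρ₂.im)) * (π₂.re * ρ₂.re - 2 * (π₂.im * ρ₂.im))
      - 2 * ((π₂.re * ρ₂.im - π₂.im * ρ₂.re) * (π₂.re * ρ₂.im - π₂.im * ρ₂.re))
      = ((p * q : ℕ) : ℤ) := by
    push_cast
    linear_combination (ρ₂.re * ρ₂.re - 2 * (ρ₂.im * ρ₂.im)) * hπnorm + (p : ℤ) * hρnorm
  obtain ⟨hqm, -⟩ := not_dvd_ms hp hq hq2 hpq hs2
  obtain ⟨hpm, -⟩ := not_dvd_ms hq hp hp2 hpq.symm (by rwa [Nat.mul_comm p q] at hs2)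
  have h1ne : (((π₂.re * ρ₂.im - π₂.im * ρ₂.re) * ρ₂.im : ℤ) : ZMod q) ≠ 0 := by
    intro h
    rcases hq'.dvd_mul.mp ((ZMod.intCast_zmod_eq_zero_iff_dvd _ _).mp h) with h' | h'
    · exact hqm h'
    · exact hqdd h'
  have h2ne : (((ρ₂.re * π₂.im - ρ₂.im * π₂.re) * π₂.im : ℤ) : ZMod p) ≠ 0 := by
    intro h
    rcases hp'.dvd_mul.mp ((ZMod.intCast_zmod_eq_zero_iff_dvd _ _).mp h) with h' | h'
    · rw [show ρ₂.re * π₂.im - ρ₂.im * π₂.re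
          = -(π₂.re * ρ₂.im - π₂.im * ρ₂.re) from by ring, dvd_neg] at h'
      exact hpm h'
    · exact hpbd h'
  rw [zsq_square_iff hq ρ₂ hρnorm hqcd hqdd π₂, zsq_square_iff hp π₂ hπnorm hpad hpbd ρ₂,
    ← legendreSym.eq_one_iff (p := q) h1ne, ← legendreSym.eq_one_iff (p := p) h2ne,
    show ρ₂.re * π₂.im - ρ₂.im * π₂.re = ρ₂.re * π₂.im - ρ₂.im * π₂.re from rfl]
  rw [symbol_eq hp hq hp2 hq2 hpq hπnorm hρnorm haodd hbeven hcodd hdeven hapos hcpos hspos]
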